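/- (Point–flat incidence bound for flats of special form, d = 1.) Let P ⊆ F_q^{n+1} and let F be a set of hyperplanes of the form F_a = {(x_1,...,x_{n+1}) : x_{n+1} = Σ_{j=1}^n a_j x_j + a_{n+1}}, a ∈ F_q^{n+1}. Then |I(P,F) − |P||F|/q| ≤ q^{n/2}(1 − 1/q)√(|P||F|). -/

import Mathlib

open Finset
open Finset

open scoped Classical in
private lemma count_lin {K : Type*} [Field K] [Fintype K] {m : ℕ}
    (d : Fin (m+1) → K) (hd : d ≠ 0) (b : K) :
    ∑ v : Fin (m+1) → K, (if ∑ j, v j * d j = b then (1:ℝ) else 0)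
      = (Fintype.card K : ℝ) ^ m := by
  obtain ⟨i, hi⟩ : ∃ i, d i ≠ 0 := by
    by_contra h
    push_neg at h
    exact hd (funext h)
  rw [← Equiv.sum_comp (Fin.insertNthEquiv (fun _ => K) i)
      (fun v => if ∑ j, v j * d j = b then (1:ℝ) else 0)]
  rw [Fintype.sum_prod_type_right]
  have step : ∀ g : Fin m → K,
      ∑ x : K, (if ∑ j, (Fin.insertNthEquiv (fun _ => K) i) (x, g) j * d j = b
        then (1:ℝ) else 0) = 1 := by
    intro g
    have hsum : ∀ x : K, ∑ j, (Fin.insertNthEquiv (fun _ => K) i) (x, g) j * d j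
        = x * d i + ∑ j : Fin m, g j * d (i.succAbove j) := by
      intro x
      rw [Fin.sum_univ_succAbove (fun j => (Fin.insertNthEquiv (fun _ => K) i) (x, g) j * d j) i]
      simp [Fin.insertNthEquiv]
    simp only [hsum]
    have : ∀ x : K, (x * d i + ∑ j : Fin m, g j * d (i.succAbove j) = b)
        ↔ x = (b - ∑ j : Fin m, g j * d (i.succAbove j)) / d i := by
      intro x
      rw [eq_div_iff hi]
      constructor
      · intro h; linear_combination h
      · intro h; linear_combination h
    simp only [this]
    simp
  simp only [step]
  simp [Finset.card_univ]

open scoped Classical in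
private lemma cross_sum {K : Type*} [Fintype K] (hq : (0:ℝ) < (Fintype.card K : ℝ))
    (α β : K) :
    ∑ c : K, (((if c = α then (1:ℝ) else 0) - 1/(Fintype.card K : ℝ))
      * ((if c = β then (1:ℝ) else 0) - 1/(Fintype.card K : ℝ)))
    = (if α = β then (1:ℝ) else 0) - 1/(Fintype.card K : ℝ) := by
  set q : ℝ := (Fintype.card K : ℝ)
  have hq0 : q ≠ 0 := ne_of_gt hq
  have expand : ∀ c : K, ((if c = α then (1:ℝ) else 0) - 1/q) * ((if c = β then (1:ℝ) else 0) - 1/q)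
      = (if c = α then (1:ℝ) else 0) * (if c = β then (1:ℝ) else 0)
        - (1/q) * (if c = α then (1:ℝ) else 0) - (1/q) * (if c = β then (1:ℝ) else 0)
        + 1/q^2 := by
    intro c; ring
  simp only [expand]
  rw [Finset.sum_add_distrib, Finset.sum_sub_distrib, Finset.sum_sub_distrib,
    ← Finset.mul_sum, ← Finset.mul_sum, Finset.sum_const, Finset.card_univ, nsmul_eq_mul]
  have h1 : ∑ c : K, (if c = α then (1:ℝ) else 0) * (if c = β then (1:ℝ) else 0)
      = if α = β then (1:ℝ) else 0 := by
    simp only [ite_mul, one_mul, zero_mul]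
    rw [Finset.sum_ite_eq' univ α (fun c => if c = β then (1:ℝ) else 0)]
    simp
  have h2 : ∑ c : K, (if c = α then (1:ℝ) else 0) = 1 := by simp
  have h3 : ∑ c : K, (if c = β then (1:ℝ) else 0) = 1 := by simp
  rw [h1, h2, h3]
  field_simp
  ring

open scoped Classical in
private lemma kernel_pt {K : Type*} [Field K] [Fintype K] {m : ℕ}
    (p p' : (Fin (m+1) → K) × K) :
    ∑ a : (Fin (m+1) → K) × K,
      (((if p.2 = (∑ j, a.1 j * p.1 j) + a.2 then (1:ℝ) else 0) - 1/(Fintype.card K : ℝ))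
      * ((if p'.2 = (∑ j, a.1 j * p'.1 j) + a.2 then (1:ℝ) else 0) - 1/(Fintype.card K : ℝ)))
    = if p.1 = p'.1 then
        ((if p.2 = p'.2 then ((Fintype.card K : ℝ))^(m+1) else 0)
          - ((Fintype.card K : ℝ))^(m+1)/(Fintype.card K : ℝ))
      else 0 := by
  set q : ℝ := (Fintype.card K : ℝ) with hqdef
  have hq : (0:ℝ) < q := by
    have := Fintype.card_pos (α := K); positivity
  have hq0 : q ≠ 0 := ne_of_gt hq
  rw [Fintype.sum_prod_type]
  have hcond : ∀ (w : Fin (m+1) → K) (c : K) (pp : (Fin (m+1) → K) × K),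
      (pp.2 = (∑ j, w j * pp.1 j) + c) ↔ (c = pp.2 - ∑ j, w j * pp.1 j) := by
    intro w c pp
    constructor
    · intro h; linear_combination -h
    · intro h; linear_combination -h
  have inner : ∀ w : Fin (m+1) → K,
      ∑ c : K, (((if p.2 = (∑ j, w j * p.1 j) + c then (1:ℝ) else 0) - 1/q)
        * ((if p'.2 = (∑ j, w j * p'.1 j) + c then (1:ℝ) else 0) - 1/q))
      = (if (p.2 - ∑ j, w j * p.1 j) = (p'.2 - ∑ j, w j * p'.1 j) then (1:ℝ) else 0) - 1/q := by
    intro w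
    have : ∀ c : K, ((if p.2 = (∑ j, w j * p.1 j) + c then (1:ℝ) else 0) - 1/q)
        * ((if p'.2 = (∑ j, w j * p'.1 j) + c then (1:ℝ) else 0) - 1/q)
        = ((if c = p.2 - ∑ j, w j * p.1 j then (1:ℝ) else 0) - 1/q)
          * ((if c = p'.2 - ∑ j, w j * p'.1 j then (1:ℝ) else 0) - 1/q) := by
      intro c
      rw [if_congr (hcond w c p) rfl rfl, if_congr (hcond w c p') rfl rfl]
    simp only [this]
    exact cross_sum hq _ _
  simp only [inner]
  have hiff : ∀ w : Fin (m+1) → K,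
      ((p.2 - ∑ j, w j * p.1 j) = (p'.2 - ∑ j, w j * p'.1 j))
      ↔ (∑ j, w j * (p.1 j - p'.1 j) = p.2 - p'.2) := by
    intro w
    have : ∑ j, w j * (p.1 j - p'.1 j) = (∑ j, w j * p.1 j) - ∑ j, w j * p'.1 j := by
      rw [← Finset.sum_sub_distrib]
      exact Finset.sum_congr rfl (fun j _ => by ring)
    rw [this]
    constructor
    · intro h; linear_combination -h
    · intro h; linear_combination -h
  have step : ∀ w : Fin (m+1) → K,
      ((if (p.2 - ∑ j, w j * p.1 j) = (p'.2 - ∑ j, w j * p'.1 j) then (1:ℝ) else 0) - 1/q)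
      = ((if (∑ j, w j * (p.1 j - p'.1 j)) = p.2 - p'.2 then (1:ℝ) else 0) - 1/q) := by
    intro w
    rw [if_congr (hiff w) rfl rfl]
  simp only [step]
  rw [Finset.sum_sub_distrib, Finset.sum_const, Finset.card_univ, nsmul_eq_mul]
  have hcardfun : (Fintype.card (Fin (m+1) → K) : ℝ) = q ^ (m+1) := by
    rw [hqdef]
    norm_cast
    simp [Fintype.card_fun]
  by_cases hpp : p.1 = p'.1
  · have hzero : ∀ w : Fin (m+1) → K, (∑ j, w j * (p.1 j - p'.1 j)) = 0 := by
      intro w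
      rw [hpp]
      simp
    have : ∀ w : Fin (m+1) → K,
        (if (∑ j, w j * (p.1 j - p'.1 j)) = p.2 - p'.2 then (1:ℝ) else 0)
        = (if p.2 = p'.2 then (1:ℝ) else 0) := by
      intro w
      rw [hzero w]
      congr 1
      simp only [eq_iff_iff]
      constructor
      · intro h; linear_combination -h
      · intro h; linear_combination -h
    simp only [this]
    rw [Finset.sum_const, Finset.card_univ, nsmul_eq_mul, if_pos hpp]
    simp only [hcardfun]
    split_ifs <;> ring
  · have hd : (fun j => p.1 j - p'.1 j) ≠ 0 := by
      intro h
      apply hpp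
      funext j
      have := congrFun h j
      simpa [sub_eq_zero] using this
    rw [count_lin _ hd (p.2 - p'.2), if_neg hpp]
    simp only [hcardfun, pow_succ]
    field_simp
    simp [hqdef]

open Finset

open scoped Classical in
private lemma fiber_count {K : Type*} [Fintype K] {n : ℕ}
    (S : Finset ((Fin n → K) × K)) (x : Fin n → K) :
    ∑ y : K, (if ((x, y) : (Fin n → K) × K) ∈ S then (1:ℝ) else 0)
      = ((S.filter (fun p => p.1 = x)).card : ℝ) := by
  rw [Finset.sum_boole]
  norm_num
  apply Finset.card_bij' (fun y _ => ((x, y) : (Fin n → K) × K)) (fun p _ => p.2)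
  · intro y hy
    simp only [mem_filter, mem_univ, true_and] at hy ⊢
    exact ⟨hy, trivial⟩
  · intro p hp
    simp only [mem_filter, mem_univ, true_and] at hp ⊢
    obtain ⟨h1, h2⟩ := hp
    rw [show ((x, p.2) : (Fin n → K) × K) = p by rw [← h2]]
    exact h1
  · intro y hy; rfl
  · intro p hp
    simp only [mem_filter] at hp
    rw [← hp.2]

open scoped Classical in
private lemma fiber_sum_f {K : Type*} [Fintype K] {n : ℕ}
    (S : Finset ((Fin n → K) × K)) (hq : (0:ℝ) < (Fintype.card K : ℝ)) (x : Fin n → K) :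
    ∑ y : K, ((if ((x, y) : (Fin n → K) × K) ∈ S then (1:ℝ) else 0)
        - ((S.filter (fun p => p.1 = x)).card : ℝ) / (Fintype.card K : ℝ)) = 0 := by
  rw [Finset.sum_sub_distrib, fiber_count, Finset.sum_const, Finset.card_univ, nsmul_eq_mul,
    mul_div_cancel₀]
  · ring
  · exact ne_of_gt hq

open scoped Classical in
private lemma sum_fiber_card {K : Type*} [Fintype K] {n : ℕ}
    (S : Finset ((Fin n → K) × K)) :
    ∑ x : Fin n → K, ((S.filter (fun p => p.1 = x)).card : ℝ) = (S.card : ℝ) := by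
  have : ∀ x : Fin n → K, ((S.filter (fun p => p.1 = x)).card : ℝ)
      = ∑ p ∈ S, (if p.1 = x then (1:ℝ) else 0) := by
    intro x; rw [Finset.sum_boole]
  simp only [this]
  rw [Finset.sum_comm]
  simp

open scoped Classical in
private lemma sum_f_sq_le {K : Type*} [Fintype K] {n : ℕ}
    (S : Finset ((Fin n → K) × K)) (hq : (0:ℝ) < (Fintype.card K : ℝ)) :
    ∑ p : (Fin n → K) × K, ((if p ∈ S then (1:ℝ) else 0)
        - ((S.filter (fun p' => p'.1 = p.1)).card : ℝ) / (Fintype.card K : ℝ)) ^ 2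
      ≤ (S.card : ℝ) * (1 - 1 / (Fintype.card K : ℝ)) := by
  set q : ℝ := (Fintype.card K : ℝ)
  have hq0 : q ≠ 0 := ne_of_gt hq
  rw [Fintype.sum_prod_type]
  have step : ∀ x : Fin n → K,
      ∑ y : K, ((if ((x,y) : (Fin n → K) × K) ∈ S then (1:ℝ) else 0)
        - ((S.filter (fun p' => p'.1 = x)).card : ℝ) / q) ^ 2
      ≤ ((S.filter (fun p' => p'.1 = x)).card : ℝ) * (1 - 1/q) := by
    intro x
    set N : ℝ := ((S.filter (fun p' => p'.1 = x)).card : ℝ) with hN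
    have hNnn : 0 ≤ N := Nat.cast_nonneg _
    have expand : ∀ y : K, ((if ((x,y) : (Fin n → K) × K) ∈ S then (1:ℝ) else 0) - N / q) ^ 2
        = (if ((x,y) : (Fin n → K) × K) ∈ S then (1:ℝ) else 0)
          - 2 * (N/q) * (if ((x,y) : (Fin n → K) × K) ∈ S then (1:ℝ) else 0) + (N/q)^2 := by
      intro y
      split_ifs <;> ring
    simp only [expand]
    rw [Finset.sum_add_distrib, Finset.sum_sub_distrib, fiber_count, ← Finset.mul_sum,
      fiber_count, Finset.sum_const, Finset.card_univ, nsmul_eq_mul]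
    have hNsq : N ≤ N^2 := by
      have : (S.filter (fun p' => p'.1 = x)).card ≤ ((S.filter (fun p' => p'.1 = x)).card)^2 :=
        Nat.le_self_pow two_ne_zero _
      calc N = ((S.filter (fun p' => p'.1 = x)).card : ℝ) := hN
        _ ≤ (((S.filter (fun p' => p'.1 = x)).card)^2 : ℕ) := by exact_mod_cast this
        _ = N^2 := by push_cast [hN]; ring
    have : N - 2*(N/q)*N + q*(N/q)^2 = N - N^2/q := by field_simp; ring
    rw [this]
    have : N * (1 - 1/q) = N - N/q := by ring
    rw [this]
    have : N/q ≤ N^2/q := by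
      gcongr
    linarith
  calc ∑ x : Fin n → K, ∑ y : K, ((if ((x,y) : (Fin n → K) × K) ∈ S then (1:ℝ) else 0)
        - ((S.filter (fun p' => p'.1 = x)).card : ℝ) / q) ^ 2
      ≤ ∑ x : Fin n → K, ((S.filter (fun p' => p'.1 = x)).card : ℝ) * (1 - 1/q) :=
        Finset.sum_le_sum (fun x _ => step x)
    _ = (S.card : ℝ) * (1 - 1/q) := by rw [← Finset.sum_mul, sum_fiber_card]


open scoped Classical in
private lemma kernel_sum {K : Type*} [Field K] [Fintype K] {m : ℕ}
    (f : (Fin (m+1) → K) × K → ℝ) (hf : ∀ x : Fin (m+1) → K, ∑ y : K, f (x, y) = 0)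
    (kernel_pt : ∀ p p' : (Fin (m+1) → K) × K,
      ∑ a : (Fin (m+1) → K) × K,
        (((if p.2 = (∑ j, a.1 j * p.1 j) + a.2 then (1:ℝ) else 0) - 1/(Fintype.card K : ℝ))
        * ((if p'.2 = (∑ j, a.1 j * p'.1 j) + a.2 then (1:ℝ) else 0) - 1/(Fintype.card K : ℝ)))
      = if p.1 = p'.1 then
          ((if p.2 = p'.2 then ((Fintype.card K : ℝ))^(m+1) else 0)
            - ((Fintype.card K : ℝ))^(m+1)/(Fintype.card K : ℝ))
        else 0) :
    ∑ a : (Fin (m+1) → K) × K,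
      (∑ p : (Fin (m+1) → K) × K,
        f p * ((if p.2 = (∑ j, a.1 j * p.1 j) + a.2 then (1:ℝ) else 0) - 1/(Fintype.card K : ℝ)))^2
    = ((Fintype.card K : ℝ))^(m+1) * ∑ p : (Fin (m+1) → K) × K, f p ^ 2 := by
  set q : ℝ := (Fintype.card K : ℝ) with hqdef
  set h : ((Fin (m+1) → K) × K) → ((Fin (m+1) → K) × K) → ℝ :=
    fun p a => (if p.2 = (∑ j, a.1 j * p.1 j) + a.2 then (1:ℝ) else 0) - 1/q with hh
  have step1 : ∑ a : (Fin (m+1) → K) × K, (∑ p : (Fin (m+1) → K) × K, f p * h p a)^2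
      = ∑ p : (Fin (m+1) → K) × K, ∑ p' : (Fin (m+1) → K) × K,
          f p * f p' * ∑ a : (Fin (m+1) → K) × K, h p a * h p' a := by
    have : ∀ a : (Fin (m+1) → K) × K, (∑ p : (Fin (m+1) → K) × K, f p * h p a)^2
        = ∑ p : (Fin (m+1) → K) × K, ∑ p' : (Fin (m+1) → K) × K,
            (f p * h p a) * (f p' * h p' a) := by
      intro a
      rw [sq, Finset.sum_mul_sum]
    simp only [this]
    rw [Finset.sum_comm]
    apply Finset.sum_congr rfl
    intro p _
    rw [Finset.sum_comm]
    apply Finset.sum_congr rfl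
    intro p' _
    rw [Finset.mul_sum]
    apply Finset.sum_congr rfl
    intro a _
    ring
  rw [step1]
  have step2 : ∀ p p' : (Fin (m+1) → K) × K,
      f p * f p' * ∑ a : (Fin (m+1) → K) × K, h p a * h p' a
      = f p * f p' * (if p.1 = p'.1 then
          ((if p.2 = p'.2 then q^(m+1) else 0) - q^(m+1)/q) else 0) := by
    intro p p'
    rw [kernel_pt p p']
  simp only [step2]
  rw [Fintype.sum_prod_type]
  have inner : ∀ (x : Fin (m+1) → K) (y : K),
      ∑ p' : (Fin (m+1) → K) × K,
        f (x,y) * f p' * (if x = p'.1 then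
          ((if y = p'.2 then q^(m+1) else 0) - q^(m+1)/q) else 0)
      = f (x,y) * (q^(m+1) * f (x,y)) := by
    intro x y
    rw [Fintype.sum_prod_type]
    have collapse : ∀ x' : Fin (m+1) → K, ∑ y' : K,
        f (x,y) * f (x',y') * (if x = x' then
          ((if y = y' then q^(m+1) else 0) - q^(m+1)/q) else 0)
        = if x = x' then (∑ y' : K,
            f (x,y) * f (x',y') * ((if y = y' then q^(m+1) else 0) - q^(m+1)/q)) else 0 := by
      intro x'
      split_ifs with hxx
      · rfl
      · simp
    simp only [collapse]
    rw [Finset.sum_ite_eq univ x (fun x' => ∑ y' : K,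
      f (x,y) * f (x',y') * ((if y = y' then q^(m+1) else 0) - q^(m+1)/q)),
      if_pos (Finset.mem_univ x)]
    have e1 : ∀ y' : K, f (x,y) * f (x,y') * ((if y = y' then q^(m+1) else 0) - q^(m+1)/q)
        = (if y = y' then f (x,y) * f (x,y') * q^(m+1) else 0)
          - (q^(m+1)/q) * (f (x,y) * f (x,y')) := by
      intro y'; split_ifs <;> ring
    simp only [e1]
    rw [Finset.sum_sub_distrib,
      Finset.sum_ite_eq univ y (fun y' => f (x,y) * f (x,y') * q^(m+1)),
      if_pos (Finset.mem_univ y), ← Finset.mul_sum, ← Finset.mul_sum, hf x,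
      mul_zero, mul_zero, sub_zero]
    ring
  simp only [inner]
  conv_rhs => rw [Fintype.sum_prod_type, Finset.mul_sum]
  apply Finset.sum_congr rfl
  intro x _
  rw [Finset.mul_sum]
  apply Finset.sum_congr rfl
  intro y _
  ring


set_option maxHeartbeats 1000000 in
open scoped Classical in
/-- Point–hyperplane incidence bound for hyperplanes of graph form (`d = 1`):
`|I(P,F) − |P||F|/q| ≤ q^{n/2}(1 − 1/q)√(|P||F|)` where `F` is a set of hyperplanes
`F_a = {(x, Σ_j a_j x_j + a_{n+1})}` in `F_q^{n+1}`. -/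
theorem stmt_15 {K : Type*} [Field K] [Fintype K] (n : ℕ) (hn : 1 ≤ n)
    (P : Finset ((Fin n → K) × K))
    (ℱ : Finset (Set ((Fin n → K) × K)))
    (hℱ : ∀ W ∈ ℱ, ∃ a : (Fin n → K) × K,
      W = {pt : (Fin n → K) × K | pt.2 = (∑ j, a.1 j * pt.1 j) + a.2}) :
    |(Nat.card {x : ((Fin n → K) × K) × Set ((Fin n → K) × K) //
        x.1 ∈ P ∧ x.2 ∈ ℱ ∧ x.1 ∈ x.2} : ℝ)
      - P.card * ℱ.card / (Fintype.card K : ℝ)|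
      ≤ Real.sqrt ((Fintype.card K : ℝ) ^ n) * (1 - 1 / (Fintype.card K : ℝ))
        * Real.sqrt (P.card * ℱ.card) := by
  obtain ⟨m, rfl⟩ : ∃ m, n = m + 1 := ⟨n - 1, by omega⟩
  classical
  set q : ℝ := (Fintype.card K : ℝ) with hqdef
  have hq1 : (1:ℝ) ≤ q := by
    have := Fintype.one_lt_card (α := K)
    rw [hqdef]; exact_mod_cast this.le
  have hq : (0:ℝ) < q := lt_of_lt_of_le one_pos hq1
  have hq0 : q ≠ 0 := ne_of_gt hq
  set e : (Fin (m+1) → K) × K → Set ((Fin (m+1) → K) × K) :=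
    fun a => {pt : (Fin (m+1) → K) × K | pt.2 = (∑ j, a.1 j * pt.1 j) + a.2} with he
  have einj : Function.Injective e := by
    intro a a' hfe
    have hmem : ∀ x : Fin (m+1) → K,
        (∑ j, a.1 j * x j) + a.2 = (∑ j, a'.1 j * x j) + a'.2 := by
      intro x
      have h1 : ((x, (∑ j, a.1 j * x j) + a.2) : (Fin (m+1) → K) × K) ∈ e a := by
        simp [he, Set.mem_setOf_eq]
      rw [hfe] at h1
      simpa [he, Set.mem_setOf_eq] using h1
    have h2 : a.2 = a'.2 := by simpa using hmem 0
    have h1 : ∀ i, a.1 i = a'.1 i := by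
      intro i
      have h3 := hmem (Pi.single i 1)
      simp only [Pi.single_apply, mul_ite, mul_one, mul_zero, Finset.sum_ite_eq',
        Finset.mem_univ, if_true, h2] at h3
      exact add_right_cancel h3
    exact Prod.ext (funext h1) h2
  set A : Finset ((Fin (m+1) → K) × K) := univ.filter (fun a => e a ∈ ℱ) with hA
  have hℱA : ℱ = A.image e := by
    ext W
    constructor
    · intro hW
      obtain ⟨a, ha⟩ := hℱ W hW
      have : e a = W := ha.symm
      refine Finset.mem_image.2 ⟨a, ?_, this⟩
      rw [hA, Finset.mem_filter]
      exact ⟨Finset.mem_univ _, this ▸ hW⟩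
    · intro hW
      obtain ⟨a, ha, rfl⟩ := Finset.mem_image.1 hW
      rw [hA, Finset.mem_filter] at ha
      exact ha.2
  have hAcard : ℱ.card = A.card := by
    rw [hℱA, Finset.card_image_of_injective _ einj]
  -- incidence count
  have hI : (Nat.card {x : ((Fin (m+1) → K) × K) × Set ((Fin (m+1) → K) × K) //
        x.1 ∈ P ∧ x.2 ∈ ℱ ∧ x.1 ∈ x.2} : ℝ)
      = ∑ p ∈ P, ∑ a ∈ A,
          (if p.2 = (∑ j, a.1 j * p.1 j) + a.2 then (1:ℝ) else 0) := by
    have h0 : Nat.card {x : ((Fin (m+1) → K) × K) × Set ((Fin (m+1) → K) × K) //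
          x.1 ∈ P ∧ x.2 ∈ ℱ ∧ x.1 ∈ x.2}
        = ((P ×ˢ ℱ).filter (fun x => x.1 ∈ x.2)).card := by
      rw [← Nat.card_eq_finsetCard]
      apply Nat.card_congr
      apply (Equiv.subtypeEquivRight ?_).symm
      intro x
      simp [Finset.mem_filter, Finset.mem_product, and_assoc]
    rw [h0, ← Finset.sum_boole, Finset.sum_product]
    apply Finset.sum_congr rfl
    intro p _
    rw [hℱA, Finset.sum_image (fun a _ a' _ hfe => einj hfe)]
    apply Finset.sum_congr rfl
    intro a _
    simp [he, Set.mem_setOf_eq]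
  -- h and its fiber-sum-zero properties
  set h : ((Fin (m+1) → K) × K) → ((Fin (m+1) → K) × K) → ℝ :=
    fun p a => (if p.2 = (∑ j, a.1 j * p.1 j) + a.2 then (1:ℝ) else 0) - 1/q with hh
  have F5 : ∀ (a : (Fin (m+1) → K) × K) (x : Fin (m+1) → K),
      ∑ y : K, h (x, y) a = 0 := by
    intro a x
    simp only [hh]
    rw [Finset.sum_sub_distrib, Finset.sum_const, Finset.card_univ, nsmul_eq_mul]
    have : ∑ y : K, (if y = (∑ j, a.1 j * x j) + a.2 then (1:ℝ) else 0) = 1 := by simp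
    rw [this]
    field_simp
    simp [hqdef]
  have F6 : ∀ (p : (Fin (m+1) → K) × K) (w : Fin (m+1) → K),
      ∑ c : K, h p (w, c) = 0 := by
    intro p w
    simp only [hh]
    rw [Finset.sum_sub_distrib, Finset.sum_const, Finset.card_univ, nsmul_eq_mul]
    have hc : ∀ c : K, (p.2 = (∑ j, w j * p.1 j) + c) ↔ (c = p.2 - ∑ j, w j * p.1 j) := by
      intro c
      constructor
      · intro hcc; linear_combination -hcc
      · intro hcc; linear_combination -hcc
    have : ∑ c : K, (if p.2 = (∑ j, w j * p.1 j) + c then (1:ℝ) else 0) = 1 := by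
      rw [Finset.sum_congr rfl (fun c _ => if_congr (hc c) rfl rfl)]
      simp
    rw [this]
    field_simp
    simp [hqdef]
  -- centered indicator functions
  set ff : (Fin (m+1) → K) × K → ℝ :=
    fun p => (if p ∈ P then (1:ℝ) else 0)
      - ((P.filter (fun p' => p'.1 = p.1)).card : ℝ)/q with hff
  set gg : (Fin (m+1) → K) × K → ℝ :=
    fun a => (if a ∈ A then (1:ℝ) else 0)
      - ((A.filter (fun a' => a'.1 = a.1)).card : ℝ)/q with hgg
  have hfP : ∀ x : Fin (m+1) → K, ∑ y : K, ff (x, y) = 0 := by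
    intro x
    have hb : ∀ y : K, ff (x, y) = (if ((x,y) : (Fin (m+1) → K) × K) ∈ P then (1:ℝ) else 0)
        - ((P.filter (fun p' => p'.1 = x)).card : ℝ)/q := fun y => rfl
    rw [Finset.sum_congr rfl (fun y _ => hb y)]
    rw [Finset.sum_sub_distrib, fiber_count P x, Finset.sum_const, Finset.card_univ,
      nsmul_eq_mul, ← hqdef]
    field_simp
    ring
  have S1a : ∀ a : (Fin (m+1) → K) × K,
      ∑ p : (Fin (m+1) → K) × K, ff p * h p a = ∑ p ∈ P, h p a := by
    intro a
    simp only [hff, sub_mul]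
    rw [Finset.sum_sub_distrib]
    have t1 : ∑ p : (Fin (m+1) → K) × K, (if p ∈ P then (1:ℝ) else 0) * h p a
        = ∑ p ∈ P, h p a := by
      simp only [ite_mul, one_mul, zero_mul]
      rw [Finset.sum_ite_mem, Finset.univ_inter]
    have t2 : ∑ p : (Fin (m+1) → K) × K,
        ((P.filter (fun p' => p'.1 = p.1)).card : ℝ)/q * h p a = 0 := by
      rw [Fintype.sum_prod_type]
      have t3 : ∀ x : Fin (m+1) → K,
          ∑ y : K, ((P.filter (fun p' => p'.1 = x)).card : ℝ)/q * h (x, y) a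
          = ((P.filter (fun p' => p'.1 = x)).card : ℝ)/q * ∑ y : K, h (x, y) a := by
        intro x; rw [Finset.mul_sum]
      rw [Finset.sum_congr rfl (fun x _ => t3 x)]
      simp only [F5, mul_zero, Finset.sum_const_zero]
    rw [t1, t2, sub_zero]
  have S1 : ∑ a : (Fin (m+1) → K) × K, gg a * ∑ p : (Fin (m+1) → K) × K, ff p * h p a
      = ∑ p ∈ P, ∑ a ∈ A, h p a := by
    calc ∑ a : (Fin (m+1) → K) × K, gg a * ∑ p : (Fin (m+1) → K) × K, ff p * h p a
        = ∑ a : (Fin (m+1) → K) × K, gg a * ∑ p ∈ P, h p a :=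
          Finset.sum_congr rfl (fun a _ => by rw [S1a a])
      _ = ∑ a ∈ A, ∑ p ∈ P, h p a := by
          simp only [hgg, sub_mul]
          rw [Finset.sum_sub_distrib]
          have t1 : ∑ a : (Fin (m+1) → K) × K, (if a ∈ A then (1:ℝ) else 0) * ∑ p ∈ P, h p a
              = ∑ a ∈ A, ∑ p ∈ P, h p a := by
            simp only [ite_mul, one_mul, zero_mul]
            rw [Finset.sum_ite_mem, Finset.univ_inter]
          have t2 : ∑ a : (Fin (m+1) → K) × K,
              ((A.filter (fun a' => a'.1 = a.1)).card : ℝ)/q * ∑ p ∈ P, h p a = 0 := by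
            rw [Fintype.sum_prod_type]
            have t3 : ∀ w : Fin (m+1) → K,
                ∑ c : K, ((A.filter (fun a' => a'.1 = w)).card : ℝ)/q * ∑ p ∈ P, h p (w, c)
                = 0 := by
              intro w
              rw [← Finset.mul_sum, Finset.sum_comm]
              rw [Finset.sum_congr rfl (fun p (_ : p ∈ P) => F6 p w),
                Finset.sum_const_zero, mul_zero]
            rw [Finset.sum_congr rfl (fun w _ => t3 w), Finset.sum_const_zero]
          rw [t1, t2, sub_zero]
      _ = ∑ p ∈ P, ∑ a ∈ A, h p a := Finset.sum_comm
  -- value of the centered incidence sum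
  have hD : ∑ p ∈ P, ∑ a ∈ A, h p a
      = (Nat.card {x : ((Fin (m+1) → K) × K) × Set ((Fin (m+1) → K) × K) //
          x.1 ∈ P ∧ x.2 ∈ ℱ ∧ x.1 ∈ x.2} : ℝ)
        - (P.card : ℝ) * (A.card : ℝ) / q := by
    simp only [hh]
    rw [hI]
    simp only [Finset.sum_sub_distrib]
    rw [Finset.sum_const, Finset.sum_const, nsmul_eq_mul, nsmul_eq_mul]
    ring
  -- Cauchy–Schwarz
  have CS : (∑ p ∈ P, ∑ a ∈ A, h p a)^2
      ≤ (∑ a : (Fin (m+1) → K) × K, gg a ^ 2)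
        * (∑ a : (Fin (m+1) → K) × K, (∑ p : (Fin (m+1) → K) × K, ff p * h p a) ^ 2) := by
    rw [← S1]
    exact Finset.sum_mul_sq_le_sq_mul_sq univ gg
      (fun a => ∑ p : (Fin (m+1) → K) × K, ff p * h p a)
  -- kernel identity
  have K1 : ∑ a : (Fin (m+1) → K) × K, (∑ p : (Fin (m+1) → K) × K, ff p * h p a) ^ 2
      = q^(m+1) * ∑ p : (Fin (m+1) → K) × K, ff p ^ 2 := by
    have := kernel_sum ff hfP (fun p p' => kernel_pt p p')
    rw [← hqdef] at this
    simpa only [hh] using this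
  -- norm bounds
  have B1 : ∑ p : (Fin (m+1) → K) × K, ff p ^ 2 ≤ (P.card : ℝ) * (1 - 1/q) := by
    have := sum_f_sq_le P (show (0:ℝ) < (Fintype.card K : ℝ) by rw [← hqdef]; exact hq)
    rw [← hqdef] at this
    simpa only [hff] using this
  have B2 : ∑ a : (Fin (m+1) → K) × K, gg a ^ 2 ≤ (A.card : ℝ) * (1 - 1/q) := by
    have := sum_f_sq_le A (show (0:ℝ) < (Fintype.card K : ℝ) by rw [← hqdef]; exact hq)
    rw [← hqdef] at this
    simpa only [hgg] using this
  have h1q : (0:ℝ) ≤ 1 - 1/q := by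
    rw [sub_nonneg, div_le_one hq]
    exact hq1
  have hffnn : (0:ℝ) ≤ ∑ p : (Fin (m+1) → K) × K, ff p ^ 2 :=
    Finset.sum_nonneg (fun p _ => sq_nonneg _)
  have Dsq : (∑ p ∈ P, ∑ a ∈ A, h p a)^2
      ≤ ((A.card : ℝ) * (1 - 1/q)) * (q^(m+1) * ((P.card : ℝ) * (1 - 1/q))) := by
    calc (∑ p ∈ P, ∑ a ∈ A, h p a)^2
        ≤ (∑ a : (Fin (m+1) → K) × K, gg a ^ 2)
          * (∑ a : (Fin (m+1) → K) × K, (∑ p : (Fin (m+1) → K) × K, ff p * h p a) ^ 2) := CS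
      _ = (∑ a : (Fin (m+1) → K) × K, gg a ^ 2)
          * (q^(m+1) * ∑ p : (Fin (m+1) → K) × K, ff p ^ 2) := by rw [K1]
      _ ≤ ((A.card : ℝ) * (1 - 1/q)) * (q^(m+1) * ((P.card : ℝ) * (1 - 1/q))) := by
          apply mul_le_mul B2 ?_ ?_ ?_
          · have : q^(m+1) > 0 := by positivity
            exact mul_le_mul_of_nonneg_left B1 this.le
          · positivity
          · exact mul_nonneg (Nat.cast_nonneg _) h1q
  have hBnn : (0:ℝ) ≤ Real.sqrt (q^(m+1)) * (1 - 1/q)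
      * Real.sqrt ((P.card : ℝ) * (A.card : ℝ)) := by
    exact mul_nonneg (mul_nonneg (Real.sqrt_nonneg _) h1q) (Real.sqrt_nonneg _)
  have hB2 : (Real.sqrt (q^(m+1)) * (1 - 1/q) * Real.sqrt ((P.card : ℝ) * (A.card : ℝ)))^2
      = ((A.card : ℝ) * (1 - 1/q)) * (q^(m+1) * ((P.card : ℝ) * (1 - 1/q))) := by
    rw [mul_pow, mul_pow, Real.sq_sqrt (pow_nonneg hq.le _),
      Real.sq_sqrt (mul_nonneg (Nat.cast_nonneg _) (Nat.cast_nonneg _))]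
    ring
  have habs : |∑ p ∈ P, ∑ a ∈ A, h p a|
      ≤ Real.sqrt (q^(m+1)) * (1 - 1/q) * Real.sqrt ((P.card : ℝ) * (A.card : ℝ)) := by
    have h2 := Real.sqrt_le_sqrt (hB2 ▸ Dsq)
    rwa [Real.sqrt_sq_eq_abs, Real.sqrt_sq hBnn] at h2
  rw [hD] at habs
  have hFA : (ℱ.card : ℝ) = (A.card : ℝ) := by exact_mod_cast hAcard
  rw [hFA]
  exact habs
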